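/- Let I and Ĩ be two adjacent finite intervals of the same length and fix α ∈ ℝ. Then there exist coverings G(I) = {J_j}_{j≥1} of I and G(Ĩ) = {J̃_j}_{j≥1} of Ĩ, both consisting of intervals of the translated dyadic grid D^α with pairwise disjoint interiors, such that |J_j| = |J̃_j| for every j and |J_{j+2}| ≤ |J_j|/2 for every j ≥ 1. -/

import Mathlib

noncomputable section
open MeasureTheory
open scoped ENNReal NNReal

/-- Second divided difference `Δ₂f(x,h) = (f(x+h) - 2f(x) + f(x-h))/h`. -/
def delta2 (f : ℝ → ℝ) (x h : ℝ) : ℝ := (f (x + h) - 2 * f x + f (x - h)) / h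

/-- `M` is a bound for the Zygmund seminorm of `f`. -/
def ZygBound (f : ℝ → ℝ) (M : ℝ) : Prop := ∀ x h : ℝ, 0 < h → |delta2 f x h| ≤ M

/-- `f` belongs to the Zygmund class `Λ_*`. -/
def MemZygmund (f : ℝ → ℝ) : Prop := Continuous f ∧ ∃ M, ZygBound f M

/-- The Zygmund seminorm `‖f‖_* = sup_{x, h>0} |Δ₂f(x,h)|`. -/
def zygNorm (f : ℝ → ℝ) : ℝ := sInf {M | 0 ≤ M ∧ ZygBound f M}

/-- Average of `g` over the interval `(a,b)`. -/
def intervalAvg (g : ℝ → ℝ) (a b : ℝ) : ℝ := (b - a)⁻¹ * ∫ t in a..b, g t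

/-- `M` bounds the mean oscillation of `g` over all finite intervals. -/
def BMOBound (g : ℝ → ℝ) (M : ℝ) : Prop := ∀ a b : ℝ, a < b →
  (∫⁻ x in Set.Ioo a b, ENNReal.ofReal ((g x - intervalAvg g a b)^2))
    ≤ ENNReal.ofReal (M^2 * (b - a))

/-- `g` has bounded mean oscillation. -/
def MemBMO (g : ℝ → ℝ) : Prop := LocallyIntegrable g volume ∧ ∃ M, BMOBound g M

/-- `f ∈ I(BMO)`: `f` is continuous and its distributional derivative is a BMO
function, i.e. `f` is a primitive of a BMO function. -/
def MemIBMO (f : ℝ → ℝ) : Prop := Continuous f ∧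
  ∃ g : ℝ → ℝ, MemBMO g ∧ ∀ x, f x = f 0 + ∫ t in (0:ℝ)..x, g t

/-- The set `A(f,ε) = {(x,h) : h > 0, |Δ₂f(x,h)| > ε}` in the upper half-plane. -/
def Aset (f : ℝ → ℝ) (ε : ℝ) : Set (ℝ × ℝ) := {p | 0 < p.2 ∧ ε < |delta2 f p.1 p.2|}

/-- `∫_I ∫_0^{|I|} χ_{A(f,ε)}(x,h) dh dx / h` for the interval `I = (a,b)`. -/
def Cquant (f : ℝ → ℝ) (ε a b : ℝ) : ℝ≥0∞ :=
  ∫⁻ x in Set.Ioo a b, ∫⁻ h in Set.Ioo 0 (b - a),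
    (Aset f ε).indicator (fun _ => (1:ℝ≥0∞)) (x, h) / ENNReal.ofReal h

/-- `C(f,ε) = sup_I (1/|I|) ∫_I ∫_0^{|I|} χ_{A(f,ε)} dh dx/h < ∞`. -/
def CFinite (f : ℝ → ℝ) (ε : ℝ) : Prop :=
  ∃ K : ℝ, ∀ a b : ℝ, a < b → Cquant f ε a b ≤ ENNReal.ofReal (K * (b - a))

/-- `dist(f, I(BMO)) = inf {‖f - g‖_* : g ∈ I(BMO)}`. -/
def distIBMO (f : ℝ → ℝ) : ℝ :=
  sInf {r | ∃ g, MemIBMO g ∧ r = zygNorm (fun x => f x - g x)}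

/-- The translation `t_n` of the dyadic grid of generation `n`: `t_n = 0` for
`n ≥ 0`, and `t_n = (4^m - 1)/3` where `n = -2m+1` or `n = -2m` for `n < 0`. -/
def tshift (n : ℤ) : ℝ := if 0 ≤ n then 0 else ((4:ℝ) ^ (((1 - n) / 2).toNat) - 1) / 3

/-- Left endpoint of the `k`-th interval of generation `n` of the dyadic grid
translated by `-α` units. -/
def dyadicL (α : ℝ) (n k : ℤ) : ℝ := (k : ℝ) * 2 ^ (-n) - tshift n - α

/-- Right endpoint of the `k`-th interval of generation `n` of the dyadic grid
translated by `-α` units. -/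
def dyadicR (α : ℝ) (n k : ℤ) : ℝ := ((k : ℝ) + 1) * 2 ^ (-n) - tshift n - α

/-- The `k`-th dyadic interval of generation `n` in the translated grid `D^α`. -/
def dyadicIα (α : ℝ) (n k : ℤ) : Set ℝ := Set.Ico (dyadicL α n k) (dyadicR α n k)

/-- The `k`-th dyadic interval of generation `n` in the standard grid `D`. -/
def dyadicI (n k : ℤ) : Set ℝ := dyadicIα 0 n k

/-- Second divided difference of `f` on the dyadic interval `(n,k)` of the grid
`D^α`: `Δ₂f(I)` with centre the midpoint of `I` and step `|I|/2`. -/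
def delta2Dα (f : ℝ → ℝ) (α : ℝ) (n k : ℤ) : ℝ :=
  delta2 f ((dyadicL α n k + dyadicR α n k) / 2) (2 ^ (-n - 1))

/-- Second divided difference of `f` on a standard dyadic interval. -/
def delta2D (f : ℝ → ℝ) (n k : ℤ) : ℝ := delta2Dα f 0 n k

/-- `M` is a bound for the dyadic Zygmund seminorm `‖f‖_{*d}`. -/
def ZygDBound (f : ℝ → ℝ) (M : ℝ) : Prop := ∀ n k : ℤ, |delta2D f n k| ≤ M

/-- `f` belongs to the dyadic Zygmund class `Λ_{*d}`. -/
def MemZygmundD (f : ℝ → ℝ) : Prop := Continuous f ∧ ∃ M, ZygDBound f M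

/-- The dyadic Zygmund seminorm `‖f‖_{*d} = sup_{I ∈ D} |Δ₂f(I)|`. -/
def zygDNorm (f : ℝ → ℝ) : ℝ := sInf {M | 0 ≤ M ∧ ZygDBound f M}


namespace Stmt11Aux

/-- index shift when refining generation `n` to `n+1`. -/
def sft (n : ℤ) : ℤ := if n + 1 ≤ 0 ∧ Even (n + 1) then -1 else 0

lemma tshift_neg_odd (m : ℕ) : tshift (-(2*(m:ℤ))-1) = ((4:ℝ)^(m+1) - 1)/3 := by
  have h : ¬ (0:ℤ) ≤ -(2*(m:ℤ))-1 := by omega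
  have h2 : ((1 - (-(2*(m:ℤ))-1)) / 2) = (m:ℤ) + 1 := by omega
  rw [tshift, if_neg h, h2, show ((m:ℤ)+1).toNat = m + 1 by omega]

lemma tshift_neg_even (m : ℕ) : tshift (-(2*(m:ℤ))-2) = ((4:ℝ)^(m+1) - 1)/3 := by
  have h : ¬ (0:ℤ) ≤ -(2*(m:ℤ))-2 := by omega
  have h2 : ((1 - (-(2*(m:ℤ))-2)) / 2) = (m:ℤ) + 1 := by omega
  rw [tshift, if_neg h, h2, show ((m:ℤ)+1).toNat = m + 1 by omega]

lemma tshift_nonneg {n : ℤ} (h : 0 ≤ n) : tshift n = 0 := if_pos h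

lemma tshift_even_pt (m : ℕ) : tshift (-(2*(m:ℤ))) = tshift (-(2*(m:ℤ))-1) - (4:ℝ)^m := by
  rw [tshift_neg_odd m]
  rcases Nat.eq_zero_or_pos m with rfl | hm
  · simp [tshift_nonneg]; norm_num
  · obtain ⟨m', rfl⟩ : ∃ m', m = m' + 1 := ⟨m - 1, by omega⟩
    rw [show (-(2*((m'+1:ℕ):ℤ))) = -(2*(m':ℤ))-2 by push_cast; ring, tshift_neg_even m']
    rw [pow_succ]
    ring

lemma tshift_odd_pt (m : ℕ) : tshift (-(2*(m:ℤ))-1) = tshift (-(2*(m:ℤ))-2) := by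
  rw [tshift_neg_odd m, tshift_neg_even m]

lemma pow4 (m : ℕ) : (2:ℝ)^((2*m : ℕ) : ℤ) = 4^m := by
  rw [zpow_natCast, pow_mul]; norm_num

lemma tshift_succ (n : ℤ) :
    tshift (n+1) = tshift n + (sft n : ℝ) * 2 ^ (-(n+1)) := by
  rcases le_or_gt 0 n with h | h
  · rw [tshift_nonneg h, tshift_nonneg (by omega : (0:ℤ) ≤ n+1), sft, if_neg (by omega)]
    simp
  · rcases Int.even_or_odd (n+1) with ⟨m, hm⟩ | ⟨m, hm⟩
    · -- n+1 = 2m with m ≤ 0 : n+1 = -(2 m'), sft n = -1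
      obtain ⟨m', hm'⟩ : ∃ m' : ℕ, n + 1 = -(2*(m':ℤ)) := ⟨(-m).toNat, by omega⟩
      have hs : sft n = -1 := by
        rw [sft, if_pos ⟨by omega, ⟨m, hm⟩⟩]
      have hn : n = -(2*(m':ℤ))-1 := by omega
      have h2 : (2:ℝ) ^ (-(n+1)) = 4^m' := by
        rw [show -(n+1) = ((2*m' : ℕ) : ℤ) by push_cast; omega, pow4]
      rw [hs, h2, hm', hn, tshift_even_pt m']
      ring
    · -- n+1 = 2m+1 < 0 : n+1 = -(2m'+1)
      obtain ⟨m', hm'⟩ : ∃ m' : ℕ, n + 1 = -(2*(m':ℤ))-1 := ⟨(-m-1).toNat, by omega⟩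
      have hs : sft n = 0 := by
        rw [sft, if_neg]
        rintro ⟨-, ⟨j, hj⟩⟩
        omega
      have hn : n = -(2*(m':ℤ))-2 := by omega
      rw [hs, hm', hn, tshift_odd_pt m']
      ring

lemma dyadicL_child (α : ℝ) (n k : ℤ) : dyadicL α n k = dyadicL α (n+1) (2*k + sft n) := by
  have h2 : (2:ℝ) ^ (-n) = 2 * 2 ^ (-(n+1)) := by
    rw [show -n = 1 + (-(n+1)) by ring, zpow_add₀ (two_ne_zero)]
    norm_num
  rw [dyadicL, dyadicL, tshift_succ n, h2]
  push_cast
  ring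

lemma dyadicL_add (α : ℝ) (n k m : ℤ) : dyadicL α n (k + m) = dyadicL α n k + m * 2^(-n) := by
  rw [dyadicL, dyadicL]; push_cast; ring

lemma dyadicI_eq (α : ℝ) (n k : ℤ) :
    dyadicIα α n k = Set.Ico (dyadicL α n k) (dyadicL α n (k+1)) := by
  rw [dyadicIα, dyadicL_add, dyadicL, dyadicR]
  norm_num
  ring_nf


lemma dyadicL_lt (α : ℝ) (n : ℤ) {k k' : ℤ} (h : k < k') : dyadicL α n k < dyadicL α n k' := by
  rw [show k' = k + (k' - k) by ring, dyadicL_add]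
  have : (0:ℝ) < (k' - k : ℤ) * 2^(-n) := by
    apply mul_pos _ (zpow_pos two_pos _)
    exact_mod_cast sub_pos.mpr h
  linarith

lemma dyadicL_le (α : ℝ) (n : ℤ) {k k' : ℤ} (h : k ≤ k') : dyadicL α n k ≤ dyadicL α n k' := by
  rcases eq_or_lt_of_le h with rfl | h
  · exact le_rfl
  · exact (dyadicL_lt α n h).le

/-- state of the construction: indices of left/right frontier at scale `N - 1 + i`. -/
noncomputable def st (α c : ℝ) (N : ℤ) (dig : ℕ → ℤ) : ℕ → ℤ × ℤ
  | 0 => (⌈(c + tshift (N-1) + α) * 2 ^ (N-1)⌉, ⌈(c + tshift (N-1) + α) * 2 ^ (N-1)⌉)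
  | i+1 =>
      let p := st α c N dig i
      let x' := 2 * p.1 + sft (N - 1 + i)
      let y' := 2 * p.2 + sft (N - 1 + i)
      let n : ℤ := N + i
      let kl := min (dig i) ⌊(dyadicL α n x' - c) * 2 ^ n⌋
      (x' - kl, y' + (dig i - kl))

/-- intervals added at step `i` (at scale `N + i`). -/
noncomputable def blocks (α c : ℝ) (N : ℤ) (dig : ℕ → ℤ) (i : ℕ) : List (ℤ × ℤ) :=
  let p := st α c N dig i
  let x' := 2 * p.1 + sft (N - 1 + i)
  let y' := 2 * p.2 + sft (N - 1 + i)
  let n : ℤ := N + i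
  let kl := min (dig i) ⌊(dyadicL α n x' - c) * 2 ^ n⌋
  let kr := dig i - kl
  ((List.range kl.toNat).map fun (t : ℕ) => (n, x' - kl + (t:ℤ))) ++
  ((List.range kr.toNat).map fun (t : ℕ) => (n, y' + (t:ℤ)))

noncomputable def LL (α c : ℝ) (N : ℤ) (dig : ℕ → ℤ) (i : ℕ) : List (ℤ × ℤ) :=
  (List.range i).flatMap (blocks α c N dig)

lemma LL_succ (α c : ℝ) (N : ℤ) (dig : ℕ → ℤ) (i : ℕ) :
    LL α c N dig (i+1) = LL α c N dig i ++ blocks α c N dig i := by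
  rw [LL, LL, List.range_succ, List.flatMap_append]
  simp

lemma blocks_fst (α c : ℝ) (N : ℤ) (dig : ℕ → ℤ) (i : ℕ) :
    ∀ e ∈ blocks α c N dig i, e.1 = N + i := by
  intro e he
  rw [blocks, List.mem_append] at he
  rcases he with he | he <;> · simp only [List.mem_map] at he; obtain ⟨t, -, rfl⟩ := he; rfl

/-- union of a block of consecutive dyadic intervals -/
lemma union_consec (α : ℝ) (n k : ℤ) (m : ℕ) :
    ⋃ e ∈ (List.range m).map (fun (t : ℕ) => (n, k + (t:ℤ))), dyadicIα α e.1 e.2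
      = Set.Ico (dyadicL α n k) (dyadicL α n (k + m)) := by
  induction m with
  | zero => simp
  | succ m ih =>
    have hsplit : ∀ (l1 l2 : List (ℤ × ℤ)),
        (⋃ e ∈ l1 ++ l2, dyadicIα α e.1 e.2)
          = (⋃ e ∈ l1, dyadicIα α e.1 e.2) ∪ ⋃ e ∈ l2, dyadicIα α e.1 e.2 := by
      intro l1 l2
      simp [List.mem_append, Set.iUnion_or, Set.iUnion_union_distrib]
    rw [List.range_succ, List.map_append, hsplit, ih]
    have h1 : (⋃ e ∈ List.map (fun (t:ℕ) => ((n:ℤ), k + (t:ℤ))) [m], dyadicIα α e.1 e.2)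
        = dyadicIα α n (k + m) := by simp
    rw [h1, dyadicI_eq]
    rw [Set.Ico_union_Ico_eq_Ico (dyadicL_le α n (by omega)) (dyadicL_le α n (by omega)),
      show k + (m:ℤ) + 1 = k + ((m+1:ℕ):ℤ) by push_cast; ring]

/-- cumulative interval count -/
def Cc (dig : ℕ → ℤ) : ℕ → ℕ
  | 0 => 0
  | i+1 => Cc dig i + (dig i).toNat

lemma mem_subset_union (α : ℝ) (l : List (ℤ × ℤ)) {e : ℤ × ℤ} (he : e ∈ l) :
    dyadicIα α e.1 e.2 ⊆ ⋃ f ∈ l, dyadicIα α f.1 f.2 := fun x hx => Set.mem_biUnion he hx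

lemma union_split (α : ℝ) (l1 l2 : List (ℤ × ℤ)) :
    (⋃ e ∈ l1 ++ l2, dyadicIα α e.1 e.2)
      = (⋃ e ∈ l1, dyadicIα α e.1 e.2) ∪ ⋃ e ∈ l2, dyadicIα α e.1 e.2 := by
  simp [List.mem_append, Set.iUnion_or, Set.iUnion_union_distrib]

lemma disj_Ico {a b c d : ℝ} (h : b ≤ c) : Disjoint (Set.Ico a b) (Set.Ico c d) := by
  rw [Set.Ico_disjoint_Ico]
  exact inf_le_left.trans (h.trans le_sup_right)

lemma consec_pairwise (α : ℝ) (n k : ℤ) (m : ℕ) :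
    ((List.range m).map fun (t : ℕ) => (n, k + (t:ℤ))).Pairwise
      (fun e f => Disjoint (dyadicIα α e.1 e.2) (dyadicIα α f.1 f.2)) := by
  rw [List.pairwise_map]
  apply List.Pairwise.imp (R := (· < ·))
  · intro t t' h
    rw [dyadicI_eq, dyadicI_eq]
    exact disj_Ico (dyadicL_le α n (by omega))
  · exact List.pairwise_lt_range

lemma main_inv (α c d : ℝ) (N : ℤ) (dig : ℕ → ℤ) (rem : ℕ → ℝ)
    (hdig1 : ∀ i, 1 ≤ dig i)
    (hrem0 : rem 0 = d - c)
    (hstep : ∀ i, rem (i+1) = rem i - dig i * 2 ^ (-(N + (i:ℤ))))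
    (hlb : ∀ i, (dig i + 1) * 2 ^ (-(N + (i:ℤ))) ≤ rem i)
    (hN : (2:ℝ) ^ (-N+1) ≤ d - c) :
    ∀ i : ℕ,
      c ≤ dyadicL α (N-1+(i:ℤ)) (st α c N dig i).1
      ∧ (st α c N dig i).1 ≤ (st α c N dig i).2
      ∧ dyadicL α (N-1+(i:ℤ)) (st α c N dig i).2 ≤ d
      ∧ (dyadicL α (N-1+(i:ℤ)) (st α c N dig i).1 - c)
          + (d - dyadicL α (N-1+(i:ℤ)) (st α c N dig i).2) = rem i
      ∧ (⋃ e ∈ LL α c N dig i, dyadicIα α e.1 e.2)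
          = Set.Ico (dyadicL α (N-1+(i:ℤ)) (st α c N dig i).1)
              (dyadicL α (N-1+(i:ℤ)) (st α c N dig i).2)
      ∧ (LL α c N dig i).Pairwise
          (fun e f => Disjoint (dyadicIα α e.1 e.2) (dyadicIα α f.1 f.2))
      ∧ (LL α c N dig i).length = Cc dig i := by
  have h2pos : ∀ m : ℤ, (0:ℝ) < 2 ^ m := fun m => zpow_pos two_pos m
  intro i
  induction i with
  | zero =>
    have hst : st α c N dig 0
        = (⌈(c + tshift (N-1) + α) * 2 ^ (N-1)⌉, ⌈(c + tshift (N-1) + α) * 2 ^ (N-1)⌉) := rfl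
    set k0 : ℤ := ⌈(c + tshift (N-1) + α) * 2 ^ (N-1)⌉ with hk0
    have hcast : (N - 1 + ((0:ℕ):ℤ)) = N - 1 := by push_cast; ring
    have hww : (2:ℝ) ^ (N-1) * 2 ^ (-(N-1)) = 1 := by
      rw [← zpow_add₀ (two_ne_zero : (2:ℝ) ≠ 0)]; norm_num
    have hXc : c ≤ dyadicL α (N-1) k0 := by
      have h1 : (c + tshift (N-1) + α) * 2 ^ (N-1) ≤ (k0:ℝ) := Int.le_ceil _
      have h2 := mul_le_mul_of_nonneg_right h1 (le_of_lt (h2pos (-(N-1))))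
      rw [mul_assoc, hww, mul_one] at h2
      rw [dyadicL]
      linarith
    have hXd : dyadicL α (N-1) k0 ≤ d := by
      have h1 : (k0:ℝ) < (c + tshift (N-1) + α) * 2 ^ (N-1) + 1 := Int.ceil_lt_add_one _
      have h2 := mul_le_mul_of_nonneg_right (le_of_lt h1) (le_of_lt (h2pos (-(N-1))))
      rw [add_mul, mul_assoc, hww, mul_one, one_mul] at h2
      have hexp : (-(N-1) : ℤ) = -N+1 := by ring
      rw [dyadicL, hexp]
      rw [hexp] at h2
      linarith
    rw [hst, hcast]
    refine ⟨hXc, le_refl _, hXd, by rw [hrem0]; ring, ?_, ?_, ?_⟩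
    · simp [LL, Set.Ico_self]
    · simp [LL]
    · simp [LL, Cc]
  | succ i ih =>
    obtain ⟨h1, h2, h3, h4, h5, h6, h7⟩ := ih
    set xk := (st α c N dig i).1 with hxk
    set yk := (st α c N dig i).2 with hyk
    set s := sft (N - 1 + i) with hs
    set n : ℤ := N + i with hn
    set x' := 2 * xk + s with hx'
    set y' := 2 * yk + s with hy'
    set kl := min (dig i) ⌊(dyadicL α n x' - c) * 2 ^ n⌋ with hkl
    set kr := dig i - kl with hkr
    have hst : st α c N dig (i+1) = (x' - kl, y' + kr) := by
      show (let p := st α c N dig i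
            let x' := 2 * p.1 + sft (N - 1 + i)
            let y' := 2 * p.2 + sft (N - 1 + i)
            let n : ℤ := N + i
            let kl := min (dig i) ⌊(dyadicL α n x' - c) * 2 ^ n⌋
            ((x' - kl, y' + (dig i - kl)) : ℤ × ℤ)) = _
      rw [hkr, hkl, hx', hy', hn, hxk, hyk]
    have hcast1 : (N - 1 + ((i+1:ℕ):ℤ)) = n := by push_cast; omega
    -- conversion of frontier points
    have hXconv : dyadicL α (N-1+(i:ℤ)) xk = dyadicL α n x' := by
      rw [dyadicL_child α (N-1+(i:ℤ)) xk]
      congr 1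
      omega
    have hYconv : dyadicL α (N-1+(i:ℤ)) yk = dyadicL α n y' := by
      rw [dyadicL_child α (N-1+(i:ℤ)) yk]
      congr 1
      omega
    rw [hXconv] at h1 h4 h5
    rw [hYconv] at h3 h4 h5
    set X := dyadicL α n x' with hX
    set Y := dyadicL α n y' with hY
    set u := (X - c) * 2 ^ n with hu
    have hu0 : 0 ≤ u := mul_nonneg (by linarith) (le_of_lt (h2pos n))
    have hfl0 : 0 ≤ ⌊u⌋ := Int.floor_nonneg.mpr hu0
    have hkl0 : 0 ≤ kl := le_min (by linarith [hdig1 i]) hfl0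
    have hklu : (kl:ℝ) ≤ u := le_trans (by exact_mod_cast min_le_right _ _) (Int.floor_le u)
    have hkldig : kl ≤ dig i := min_le_left _ _
    have hkr0 : 0 ≤ kr := by omega
    have hinv : (2:ℝ) ^ n * 2 ^ (-n) = 1 := by
      rw [← zpow_add₀ (two_ne_zero : (2:ℝ) ≠ 0)]; norm_num
    have hXcu : X - c = u * 2 ^ (-n) := by
      rw [hu, mul_assoc, hinv, mul_one]
    -- the two key placement bounds
    have hklbd : (kl:ℝ) * 2 ^ (-n) ≤ X - c := by
      rw [hXcu]
      exact mul_le_mul_of_nonneg_right hklu (le_of_lt (h2pos (-n)))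
    have hkrbd : (kr:ℝ) * 2 ^ (-n) ≤ d - Y := by
      rcases le_or_gt (dig i) ⌊u⌋ with hc | hc
      · have : kl = dig i := min_eq_left hc
        have : kr = 0 := by omega
        rw [this]
        simp
        linarith
      · have hkl' : kl = ⌊u⌋ := min_eq_right (le_of_lt hc)
        have hfu : u < (⌊u⌋:ℝ) + 1 := Int.lt_floor_add_one u
        have hlbi := hlb i
        rw [← hn] at hlbi
        have hkrv : (kr:ℝ) = (dig i : ℝ) - ⌊u⌋ := by rw [hkr, hkl']; push_cast; ring
        have : (kr:ℝ) < (dig i : ℝ) + 1 - u := by rw [hkrv]; linarith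
        have h8 := mul_le_mul_of_nonneg_right (le_of_lt this) (le_of_lt (h2pos (-n)))
        have h9 : ((dig i : ℝ) + 1 - u) * 2 ^ (-n) = ((dig i:ℝ) + 1) * 2^(-n) - u * 2^(-n) := by ring
        rw [h9] at h8
        rw [← hXcu] at h8
        linarith
    -- frontier arithmetic
    have hXnew : dyadicL α n (x' - kl) = X - kl * 2 ^ (-n) := by
      have := dyadicL_add α n (x' - kl) kl
      rw [show x' - kl + kl = x' by ring] at this
      rw [hX]
      linarith [this]
    have hYnew : dyadicL α n (y' + kr) = Y + kr * 2 ^ (-n) := by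
      rw [dyadicL_add α n y' kr, hY]
    have hklr : (kl:ℝ) + (kr:ℝ) = (dig i : ℝ) := by
      rw [hkr]; push_cast; ring
    have hxy' : x' ≤ y' := by
      rw [hx', hy']; omega
    -- blocks and LL
    have hbl : blocks α c N dig i
        = ((List.range kl.toNat).map fun (t : ℕ) => (n, (x' - kl) + (t:ℤ)))
          ++ ((List.range kr.toNat).map fun (t : ℕ) => (n, y' + (t:ℤ))) := by
      show (let p := st α c N dig i
            let x' := 2 * p.1 + sft (N - 1 + i)
            let y' := 2 * p.2 + sft (N - 1 + i)
            let n : ℤ := N + i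
            let kl := min (dig i) ⌊(dyadicL α n x' - c) * 2 ^ n⌋
            let kr := dig i - kl
            ((List.range kl.toNat).map fun (t : ℕ) => (n, x' - kl + (t:ℤ))) ++
            ((List.range kr.toNat).map fun (t : ℕ) => (n, y' + (t:ℤ)))) = _
      rw [hkr, hkl, hx', hy', hn, hxk, hyk]
    have hUL : (⋃ e ∈ (List.range kl.toNat).map (fun (t : ℕ) => (n, (x' - kl) + (t:ℤ))),
          dyadicIα α e.1 e.2) = Set.Ico (X - kl * 2^(-n)) X := by
      rw [union_consec, hXnew, show x' - kl + (kl.toNat : ℤ) = x' by omega]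
    have hUR : (⋃ e ∈ (List.range kr.toNat).map (fun (t : ℕ) => (n, y' + (t:ℤ))),
          dyadicIα α e.1 e.2) = Set.Ico Y (Y + kr * 2^(-n)) := by
      rw [union_consec, show (kr.toNat : ℤ) = kr by omega, hYnew]
    have hXY : X ≤ Y := by
      rw [hX, hY]; exact dyadicL_le α n (by omega)
    have hXX : X - kl * 2^(-n) ≤ X := by
      have : (0:ℝ) ≤ (kl:ℝ) * 2^(-n) := mul_nonneg (by exact_mod_cast hkl0) (le_of_lt (h2pos (-n)))
      linarith
    have hYY : Y ≤ Y + kr * 2^(-n) := by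
      have : (0:ℝ) ≤ (kr:ℝ) * 2^(-n) := mul_nonneg (by exact_mod_cast hkr0) (le_of_lt (h2pos (-n)))
      linarith
    have hUB : (⋃ e ∈ blocks α c N dig i, dyadicIα α e.1 e.2)
        = Set.Ico (X - kl * 2^(-n)) X ∪ Set.Ico Y (Y + kr * 2^(-n)) := by
      rw [hbl, union_split, hUL, hUR]
    have hU : (⋃ e ∈ LL α c N dig (i+1), dyadicIα α e.1 e.2)
        = Set.Ico (X - kl * 2^(-n)) (Y + kr * 2^(-n)) := by
      rw [LL_succ, union_split, h5, hUB]
      rw [Set.union_left_comm, Set.Ico_union_Ico_eq_Ico hXY hYY,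
          Set.Ico_union_Ico_eq_Ico hXX (hXY.trans hYY)]
    -- pairwise disjointness
    have hsubOld : ∀ e ∈ LL α c N dig i, dyadicIα α e.1 e.2 ⊆ Set.Ico X Y := by
      intro e he
      have := mem_subset_union α _ he
      rwa [h5] at this
    have hsubB : ∀ e ∈ blocks α c N dig i,
        dyadicIα α e.1 e.2 ⊆ Set.Ico (X - kl*2^(-n)) X ∪ Set.Ico Y (Y + kr*2^(-n)) := by
      intro e he
      have := mem_subset_union α _ he
      rwa [hUB] at this
    have hsubL : ∀ e ∈ (List.range kl.toNat).map (fun (t:ℕ) => (n, (x'-kl) + (t:ℤ))),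
        dyadicIα α e.1 e.2 ⊆ Set.Ico (X - kl*2^(-n)) X := by
      intro e he
      have := mem_subset_union α _ he
      rwa [hUL] at this
    have hsubR : ∀ e ∈ (List.range kr.toNat).map (fun (t:ℕ) => (n, y' + (t:ℤ))),
        dyadicIα α e.1 e.2 ⊆ Set.Ico Y (Y + kr*2^(-n)) := by
      intro e he
      have := mem_subset_union α _ he
      rwa [hUR] at this
    have hpairB : (blocks α c N dig i).Pairwise
        (fun e f => Disjoint (dyadicIα α e.1 e.2) (dyadicIα α f.1 f.2)) := by
      rw [hbl, List.pairwise_append]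
      refine ⟨consec_pairwise α n (x'-kl) kl.toNat, consec_pairwise α n y' kr.toNat, ?_⟩
      intro e he f hf
      exact (disj_Ico hXY).mono (hsubL e he) (hsubR f hf)
    have hpair : (LL α c N dig (i+1)).Pairwise
        (fun e f => Disjoint (dyadicIα α e.1 e.2) (dyadicIα α f.1 f.2)) := by
      rw [LL_succ, List.pairwise_append]
      refine ⟨h6, hpairB, ?_⟩
      intro e he f hf
      have hd : Disjoint (Set.Ico X Y) (Set.Ico (X - kl*2^(-n)) X ∪ Set.Ico Y (Y + kr*2^(-n))) := by
        rw [Set.disjoint_union_right]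
        exact ⟨(disj_Ico (le_refl X)).symm, disj_Ico (le_refl Y)⟩
      exact hd.mono (hsubOld e he) (hsubB f hf)
    have hlen : (LL α c N dig (i+1)).length = Cc dig (i+1) := by
      rw [LL_succ, List.length_append, h7, hbl]
      simp only [List.length_append, List.length_map, List.length_range, Cc]
      omega
    rw [hst, hcast1]
    have hmul : ((kl:ℝ)+(kr:ℝ))*2^(-n) = (dig i:ℝ)*2^(-n) := by rw [hklr]
    have hsi := hstep i
    rw [← hn] at hsi
    refine ⟨?_, ?_, ?_, ?_, ?_, hpair, hlen⟩
    · show c ≤ dyadicL α n (x' - kl)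
      rw [hXnew]
      linarith
    · show x' - kl ≤ y' + kr
      omega
    · show dyadicL α n (y' + kr) ≤ d
      rw [hYnew]
      linarith
    · show (dyadicL α n (x' - kl) - c) + (d - dyadicL α n (y' + kr)) = rem (i+1)
      rw [hXnew, hYnew, hsi]
      linarith [hmul]
    · show (⋃ e ∈ LL α c N dig (i+1), dyadicIα α e.1 e.2)
        = Set.Ico (dyadicL α n (x' - kl)) (dyadicL α n (y' + kr))
      rw [hXnew, hYnew]
      exact hU

lemma Cc_mono (dig : ℕ → ℤ) : Monotone (Cc dig) := by
  apply monotone_nat_of_le_succ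
  intro i
  simp [Cc]

lemma Cc_lt_succ (dig : ℕ → ℤ) (hdig1 : ∀ i, 1 ≤ dig i) (i : ℕ) :
    Cc dig i < Cc dig (i+1) := by
  have := hdig1 i
  simp [Cc]
  omega

lemma lt_Cc_succ (dig : ℕ → ℤ) (hdig1 : ∀ i, 1 ≤ dig i) (j : ℕ) : j < Cc dig (j+1) := by
  induction j with
  | zero => exact Cc_lt_succ dig hdig1 0
  | succ j ih => exact lt_of_le_of_lt ih (Cc_lt_succ dig hdig1 (j+1))

lemma Cc_succ_le (dig : ℕ → ℤ) (hdig2 : ∀ i, dig i ≤ 2) (i : ℕ) :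
    Cc dig (i+1) ≤ Cc dig i + 2 := by
  have := hdig2 i
  simp [Cc]
  omega

open Classical in
/-- step index of the `j`-th interval -/
noncomputable def fdig (dig : ℕ → ℤ) (j : ℕ) : ℕ :=
  if h : ∃ i, j < Cc dig (i+1) then Nat.find h else 0

lemma fdig_spec (dig : ℕ → ℤ) (hdig1 : ∀ i, 1 ≤ dig i) (j : ℕ) :
    Cc dig (fdig dig j) ≤ j ∧ j < Cc dig (fdig dig j + 1) := by
  have hex : ∃ i, j < Cc dig (i+1) := ⟨j, lt_Cc_succ dig hdig1 j⟩
  rw [fdig, dif_pos hex]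
  refine ⟨?_, Nat.find_spec hex⟩
  rcases Nat.eq_zero_or_pos (Nat.find hex) with h0 | h0
  · rw [h0]; simp [Cc]
  · have hmin := Nat.find_min hex (m := Nat.find hex - 1) (by omega)
    rw [show Nat.find hex - 1 + 1 = Nat.find hex by omega] at hmin
    omega

lemma fdig_decay (dig : ℕ → ℤ) (hdig1 : ∀ i, 1 ≤ dig i) (hdig2 : ∀ i, dig i ≤ 2) (j : ℕ) :
    fdig dig j + 1 ≤ fdig dig (j+2) := by
  obtain ⟨h1, h2⟩ := fdig_spec dig hdig1 j
  obtain ⟨h3, h4⟩ := fdig_spec dig hdig1 (j+2)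
  by_contra hcon
  have hle : fdig dig (j+2) ≤ fdig dig j := by omega
  have : Cc dig (fdig dig (j+2) + 1) ≤ Cc dig (fdig dig j + 1) := Cc_mono dig (by omega)
  have := Cc_succ_le dig hdig2 (fdig dig j)
  omega

lemma LL_prefix (α c : ℝ) (N : ℤ) (dig : ℕ → ℤ) {i m : ℕ} (h : i ≤ m) :
    LL α c N dig i <+: LL α c N dig m := by
  induction m with
  | zero => rw [Nat.le_zero.mp h]
  | succ m ih =>
    rcases Nat.lt_or_ge i (m+1) with h' | h'
    · exact (ih (by omega)).trans (by rw [LL_succ]; exact List.prefix_append _ _)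
    · rw [show i = m + 1 by omega]

/-- the covering of `[c,d)` -/
noncomputable def Jfun (α c : ℝ) (N : ℤ) (dig : ℕ → ℤ) (j : ℕ) : ℤ × ℤ :=
  (LL α c N dig (j+1)).getD j (0, 0)

lemma cover (α c d : ℝ) (N : ℤ) (dig : ℕ → ℤ) (rem : ℕ → ℝ)
    (hdig1 : ∀ i, 1 ≤ dig i)
    (hrem0 : rem 0 = d - c)
    (hstep : ∀ i, rem (i+1) = rem i - dig i * 2 ^ (-(N + (i:ℤ))))
    (hlb : ∀ i, (dig i + 1) * 2 ^ (-(N + (i:ℤ))) ≤ rem i)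
    (hN : (2:ℝ) ^ (-N+1) ≤ d - c)
    (hto : Filter.Tendsto rem Filter.atTop (nhds 0)) :
    (∀ j, (Jfun α c N dig j).1 = N + fdig dig j) ∧
    (∀ j, dyadicIα α (Jfun α c N dig j).1 (Jfun α c N dig j).2 ⊆ Set.Ico c d) ∧
    (Set.Ioo c d ⊆ ⋃ j, dyadicIα α (Jfun α c N dig j).1 (Jfun α c N dig j).2) ∧
    (∀ i j, i ≠ j → Disjoint (dyadicIα α (Jfun α c N dig i).1 (Jfun α c N dig i).2)
      (dyadicIα α (Jfun α c N dig j).1 (Jfun α c N dig j).2)) := by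
  have hinv := main_inv α c d N dig rem hdig1 hrem0 hstep hlb hN
  have hlen : ∀ m, (LL α c N dig m).length = Cc dig m := fun m => (hinv m).2.2.2.2.2.2
  have hJeq : ∀ m j, (hj : j < (LL α c N dig m).length) →
      Jfun α c N dig j = (LL α c N dig m)[j] := by
    intro m j hj
    have hj1 : j < (LL α c N dig (j+1)).length := by
      rw [hlen]; exact lt_Cc_succ dig hdig1 j
    rw [Jfun, List.getD_eq_getElem _ _ hj1]
    rcases Nat.le_total (j+1) m with h | h
    · exact (LL_prefix α c N dig h).getElem hj1
    · exact ((LL_prefix α c N dig h).getElem hj).symm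
  have hJmem : ∀ j, Jfun α c N dig j ∈ LL α c N dig (j+1) := by
    intro j
    have hj1 : j < (LL α c N dig (j+1)).length := by
      rw [hlen]; exact lt_Cc_succ dig hdig1 j
    rw [hJeq (j+1) j hj1]
    exact List.getElem_mem hj1
  refine ⟨?_, ?_, ?_, ?_⟩
  · -- scale identification
    intro j
    obtain ⟨hf1, hf2⟩ := fdig_spec dig hdig1 j
    set f := fdig dig j
    have hjlt : j < (LL α c N dig (f+1)).length := by rw [hlen]; exact hf2
    have hsplit : LL α c N dig (f+1) = LL α c N dig f ++ blocks α c N dig f := LL_succ _ _ _ _ _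
    have hgelem : (LL α c N dig (f+1))[j] ∈ blocks α c N dig f := by
      have hlf : (LL α c N dig f).length ≤ j := by rw [hlen]; exact hf1
      have hjlt' : j < (LL α c N dig f ++ blocks α c N dig f).length := by
        rw [← hsplit]; exact hjlt
      have h1 : (LL α c N dig (f+1))[j]'hjlt
          = (LL α c N dig f ++ blocks α c N dig f)[j]'hjlt' := List.getElem_of_eq hsplit hjlt
      rw [h1, List.getElem_append_right hlf]
      exact List.getElem_mem _
    rw [hJeq (f+1) j hjlt]
    exact blocks_fst α c N dig f _ hgelem
  · -- subset
    intro j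
    have hmem := hJmem j
    have h5 := (hinv (j+1)).2.2.2.2.1
    have hsub := mem_subset_union α _ hmem
    rw [h5] at hsub
    refine hsub.trans (Set.Ico_subset_Ico ?_ ?_)
    · exact (hinv (j+1)).1
    · exact (hinv (j+1)).2.2.1
  · -- covering
    intro z hz
    obtain ⟨hz1, hz2⟩ := hz
    have hpos : (0:ℝ) < min (z - c) (d - z) := by
      simp only [lt_min_iff]
      constructor <;> linarith
    obtain ⟨i, hi⟩ := (hto.eventually_lt_const hpos).exists
    obtain ⟨g1, g2, g3, g4, g5, g6, g7⟩ := hinv i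
    have hzmem : z ∈ Set.Ico (dyadicL α (N-1+(i:ℤ)) (st α c N dig i).1)
        (dyadicL α (N-1+(i:ℤ)) (st α c N dig i).2) := by
      constructor
      · have : rem i < z - c := lt_of_lt_of_le hi (min_le_left _ _)
        have hY : d - dyadicL α (N-1+(i:ℤ)) (st α c N dig i).2 ≥ 0 := by linarith
        linarith
      · have : rem i < d - z := lt_of_lt_of_le hi (min_le_right _ _)
        have hX : dyadicL α (N-1+(i:ℤ)) (st α c N dig i).1 - c ≥ 0 := by linarith
        linarith
    have hzmem' : z ∈ ⋃ e ∈ LL α c N dig i, dyadicIα α e.1 e.2 :=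
      g5.symm.subset hzmem
    simp only [Set.mem_iUnion] at hzmem' ⊢
    obtain ⟨e, he, hze⟩ := hzmem'
    obtain ⟨j, hj, hje⟩ := List.mem_iff_getElem.mp he
    refine ⟨j, ?_⟩
    rw [hJeq i j hj, hje]
    exact hze
  · -- disjointness
    intro i j hij
    set m := max i j + 1 with hm
    have hi : i < (LL α c N dig m).length := by
      rw [hlen]
      exact lt_of_lt_of_le (lt_Cc_succ dig hdig1 i) (Cc_mono dig (by omega))
    have hj : j < (LL α c N dig m).length := by
      rw [hlen]
      exact lt_of_lt_of_le (lt_Cc_succ dig hdig1 j) (Cc_mono dig (by omega))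
    have hp := (hinv m).2.2.2.2.2.1
    rw [List.pairwise_iff_getElem] at hp
    rw [hJeq m i hi, hJeq m j hj]
    rcases Nat.lt_or_ge i j with h | h
    · exact hp i j hi hj h
    · exact (hp j i hj hi (by omega)).symm


lemma floor_double (u : ℝ) : 2*⌊u⌋ ≤ ⌊2*u⌋ ∧ ⌊2*u⌋ ≤ 2*⌊u⌋ + 1 := by
  constructor
  · apply Int.le_floor.mpr
    push_cast
    linarith [Int.floor_le u]
  · have h2 : ⌊2*u⌋ < 2*⌊u⌋ + 2 := by
      apply Int.floor_lt.mpr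
      push_cast
      linarith [Int.lt_floor_add_one u]
    omega

lemma digits_exist (l : ℝ) (hl : 0 < l) :
    ∃ (N : ℤ) (dig : ℕ → ℤ) (rem : ℕ → ℝ),
      (∀ i, 1 ≤ dig i) ∧ (∀ i, dig i ≤ 2) ∧ rem 0 = l ∧
      (∀ i, rem (i+1) = rem i - dig i * 2 ^ (-(N + (i:ℤ)))) ∧
      (∀ i, (dig i + 1) * 2 ^ (-(N + (i:ℤ))) ≤ rem i) ∧
      ((2:ℝ) ^ (-N+1) ≤ l) ∧
      Filter.Tendsto rem Filter.atTop (nhds 0) := by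
  have h2pos : ∀ m : ℤ, (0:ℝ) < 2 ^ m := fun m => zpow_pos two_pos m
  set M : ℤ := Int.log 2 l with hM
  set N : ℤ := 1 - M with hN
  set r : ℝ := l * 2 ^ N - 2 with hr
  have hlog1 : (2:ℝ) ^ M ≤ l := by
    have := Int.zpow_log_le_self (b := 2) one_lt_two hl
    simpa using this
  have hlog2 : l < (2:ℝ) ^ (M+1) := by
    have := Int.lt_zpow_succ_log_self (b := 2) one_lt_two l
    simpa using this
  have hcancel : ∀ p q : ℤ, (2:ℝ)^p * 2^q = 2^(p+q) := fun p q =>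
    (zpow_add₀ (two_ne_zero) p q).symm
  have hr0 : 0 ≤ r := by
    rw [hr]
    have h := mul_le_mul_of_nonneg_right hlog1 (le_of_lt (h2pos N))
    rw [hcancel M N, show M + N = 1 by omega] at h
    have : (2:ℝ)^(1:ℤ) = 2 := by norm_num
    rw [this] at h
    linarith
  have hr2 : r < 2 := by
    rw [hr]
    have h := mul_lt_mul_of_pos_right hlog2 (h2pos N)
    rw [hcancel (M+1) N, show M + 1 + N = 2 by omega] at h
    have : (2:ℝ)^(2:ℤ) = 4 := by norm_num
    rw [this] at h
    linarith
  set u : ℕ → ℝ := fun i => r * 2 ^ ((i:ℤ)-1) with hu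
  have husucc : ∀ i : ℕ, u (i+1) = 2 * u i := by
    intro i
    rw [hu]
    simp only []
    rw [show ((i+1:ℕ):ℤ) - 1 = 1 + ((i:ℤ) - 1) by push_cast; ring,
      zpow_add₀ (two_ne_zero : (2:ℝ) ≠ 0)]
    have : (2:ℝ)^(1:ℤ) = 2 := by norm_num
    rw [this]
    ring
  set dig : ℕ → ℤ := fun i => 1 + (⌊u (i+1)⌋ - 2*⌊u i⌋) with hdig
  set rem : ℕ → ℝ := fun i => 2^(-N) * 2^(-(i:ℤ)+1) * (u i - ⌊u i⌋ + 1) with hrem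
  have hu00 : ⌊u 0⌋ = 0 := by
    rw [hu]
    simp only [Nat.cast_zero, zero_sub]
    rw [Int.floor_eq_zero_iff]
    constructor
    · positivity
    · have : (2:ℝ) ^ (-1 : ℤ) = 1/2 := by norm_num
      rw [this]
      simp
      linarith
  have hfrac : ∀ i, 0 ≤ u i - ⌊u i⌋ ∧ u i - ⌊u i⌋ < 1 := fun i =>
    ⟨by linarith [Int.floor_le (u i)], by linarith [Int.lt_floor_add_one (u i)]⟩
  have hfd : ∀ i, 2*⌊u i⌋ ≤ ⌊u (i+1)⌋ ∧ ⌊u (i+1)⌋ ≤ 2*⌊u i⌋ + 1 := by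
    intro i
    rw [husucc i]
    exact floor_double (u i)
  have e2 : ∀ i : ℕ, (2:ℝ)^(-(i:ℤ)+1) = 2 * 2^(-(i:ℤ)) := by
    intro i
    rw [show (-(i:ℤ)+1) = 1 + (-(i:ℤ)) by ring, zpow_add₀ (two_ne_zero : (2:ℝ)≠0)]
    have : (2:ℝ)^(1:ℤ) = 2 := by norm_num
    rw [this]
  have e3 : ∀ i : ℕ, (2:ℝ)^(-(N+(i:ℤ))) = 2^(-N) * 2^(-(i:ℤ)) := by
    intro i
    rw [hcancel]
    congr 1
    ring
  refine ⟨N, dig, rem, ?_, ?_, ?_, ?_, ?_, ?_, ?_⟩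
  · intro i
    have := (hfd i).1
    simp only [hdig]
    omega
  · intro i
    have := (hfd i).2
    simp only [hdig]
    omega
  · -- rem 0 = l
    have hNN : (2:ℝ)^(-N) * 2^N = 1 := by rw [hcancel]; norm_num
    have hu0v : u 0 = r * 2^(-1:ℤ) := by rw [hu]; norm_num
    have hhalf : (2:ℝ)^(-1:ℤ) = 1/2 := by norm_num
    have h20 : (2:ℝ)^(-(0:ℕ)+1 : ℤ) = 2 := by norm_num
    rw [hrem]
    simp only [Nat.cast_zero, neg_zero, zero_add, hu00, Int.cast_zero]
    rw [hu0v, hhalf, show (2:ℝ)^(1:ℤ) = 2 by norm_num]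
    have expand : (2:ℝ)^(-N) * 2 * (r * (1/2) - 0 + 1) = 2^(-N) * (r + 2) := by ring
    rw [expand, hr]
    have : l * 2^N - 2 + 2 = l * 2^N := by ring
    rw [this, show (2:ℝ)^(-N) * (l * 2^N) = l * (2^(-N)*2^N) by ring, hNN, mul_one]
  · -- step
    intro i
    have hus := husucc i
    rw [hrem, hdig]
    simp only []
    rw [show ((i+1:ℕ):ℤ) = (i:ℤ)+1 by push_cast; ring]
    rw [show (-((i:ℤ)+1)+1) = -(i:ℤ) by ring]
    rw [e2 i, e3 i, hus]
    push_cast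
    ring
  · -- lower bound
    intro i
    have hfl : (⌊2 * u i⌋ : ℝ) ≤ 2 * u i := Int.floor_le _
    have hfl' : (⌊u (i+1)⌋ : ℝ) ≤ 2 * u i := by rw [husucc i] at *; exact hfl
    have hpp : (0:ℝ) < 2^(-N) * 2^(-(i:ℤ)) := mul_pos (h2pos _) (h2pos _)
    rw [hrem, hdig]
    simp only []
    rw [e2 i, e3 i]
    have key : ((1 + (⌊u (i+1)⌋ - 2*⌊u i⌋) : ℤ) : ℝ) + 1 ≤ 2 * (u i - ⌊u i⌋ + 1) := by
      push_cast
      linarith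
    have goal_eq : (2:ℝ)^(-N) * (2 * 2^(-(i:ℤ))) * (u i - ⌊u i⌋ + 1)
        = (2 * (u i - ⌊u i⌋ + 1)) * (2^(-N) * 2^(-(i:ℤ))) := by ring
    rw [goal_eq]
    exact mul_le_mul_of_nonneg_right key (le_of_lt hpp)
  · -- 2^(-N+1) ≤ l
    rw [show -N+1 = M by omega]
    exact hlog1
  · -- tendsto
    have hub : ∀ i : ℕ, rem i ≤ (2:ℝ)^(-N+2) * (1/2)^i := by
      intro i
      have e4 : (2:ℝ)^(-(i:ℤ)) = (1/2)^i := by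
        rw [one_div, inv_pow, ← zpow_natCast (2:ℝ) i, ← zpow_neg]
      have e5 : (2:ℝ)^(-N+2) = 2^(-N) * 4 := by
        rw [zpow_add₀ (two_ne_zero : (2:ℝ)≠0)]
        norm_num
      rw [hrem]
      simp only []
      rw [e2 i, e5, ← e4]
      have h1 := (hfrac i).2
      have hAB : (0:ℝ) ≤ 2^(-N) * 2^(-(i:ℤ)) :=
        le_of_lt (mul_pos (h2pos _) (h2pos _))
      calc (2:ℝ)^(-N) * (2*2^(-(i:ℤ))) * (u i - ⌊u i⌋ + 1)
          = (2^(-N) * 2^(-(i:ℤ))) * (2*(u i - ⌊u i⌋ + 1)) := by ring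
        _ ≤ (2^(-N) * 2^(-(i:ℤ))) * 4 := mul_le_mul_of_nonneg_left (by linarith) hAB
        _ = 2^(-N) * 4 * 2^(-(i:ℤ)) := by ring
    have hlbnd : ∀ i : ℕ, 0 ≤ rem i := by
      intro i
      rw [hrem]
      have h1 := (hfrac i).1
      have h2 := h2pos (-N)
      have h3 := h2pos (-(i:ℤ)+1)
      positivity
    have hgeo : Filter.Tendsto (fun i : ℕ => (2:ℝ)^(-N+2) * (1/2)^i) Filter.atTop (nhds 0) := by
      have := (tendsto_pow_atTop_nhds_zero_of_lt_one (by norm_num : (0:ℝ) ≤ 1/2)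
        (by norm_num : (1/2:ℝ) < 1)).const_mul ((2:ℝ)^(-N+2))
      simpa using this
    exact squeeze_zero hlbnd hub hgeo

end Stmt11Aux

open Stmt11Aux

/-- Lemma 4.2: for two adjacent intervals `I = [a,b)` and `Ĩ = I - |I|` of the
same length and any `α ∈ ℝ`, there are coverings `G(I) = {J_j}` of `I` and
`G(Ĩ) = {J̃_j}` of `Ĩ` by intervals of the grid `D^α` with pairwise disjoint
interiors, such that `|J_j| = |J̃_j|` for every `j` and `|J_{j+2}| ≤ |J_j|/2`. -/
theorem stmt11 (α a b : ℝ) (hab : a < b) :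
    ∃ J Jt : ℕ → ℤ × ℤ,
      (∀ j, dyadicIα α (J j).1 (J j).2 ⊆ Set.Ico a b) ∧
      (∀ j, dyadicIα α (Jt j).1 (Jt j).2 ⊆ Set.Ico (a - (b - a)) a) ∧
      (Set.Ioo a b ⊆ ⋃ j, dyadicIα α (J j).1 (J j).2) ∧
      (Set.Ioo (a - (b - a)) a ⊆ ⋃ j, dyadicIα α (Jt j).1 (Jt j).2) ∧
      (∀ i j : ℕ, i ≠ j →
        interior (dyadicIα α (J i).1 (J i).2) ∩ interior (dyadicIα α (J j).1 (J j).2) = ∅) ∧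
      (∀ i j : ℕ, i ≠ j →
        interior (dyadicIα α (Jt i).1 (Jt i).2) ∩ interior (dyadicIα α (Jt j).1 (Jt j).2) = ∅) ∧
      (∀ j : ℕ, (J j).1 = (Jt j).1) ∧
      (∀ j : ℕ, (2:ℝ) ^ (-(J (j+2)).1) ≤ (2:ℝ) ^ (-(J j).1) / 2) := by
  obtain ⟨N, dig, rem, hd1, hd2, hr0, hstep, hlb, hN, hto⟩ :=
    digits_exist (b - a) (by linarith)
  obtain ⟨hs1, hsub1, hcov1, hdis1⟩ :=
    cover α a b N dig rem hd1 (by rw [hr0]) hstep hlb (by linarith) hto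
  obtain ⟨hs2, hsub2, hcov2, hdis2⟩ :=
    cover α (a - (b - a)) a N dig rem hd1 (by rw [hr0]; ring) hstep hlb (by linarith) hto
  refine ⟨Jfun α a N dig, Jfun α (a - (b - a)) N dig,
    hsub1, hsub2, hcov1, hcov2, ?_, ?_, ?_, ?_⟩
  · intro i j hij
    exact Set.disjoint_iff_inter_eq_empty.mp
      ((hdis1 i j hij).mono interior_subset interior_subset)
  · intro i j hij
    exact Set.disjoint_iff_inter_eq_empty.mp
      ((hdis2 i j hij).mono interior_subset interior_subset)
  · intro j
    rw [hs1 j, hs2 j]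
  · intro j
    rw [hs1 j, hs1 (j+2)]
    have hdec := fdig_decay dig hd1 hd2 j
    have hle : (-(N + (fdig dig (j+2) : ℤ))) ≤ (-(N + (fdig dig j : ℤ))) + (-1) := by
      push_cast
      omega
    calc (2:ℝ) ^ (-(N + (fdig dig (j+2):ℤ)))
        ≤ 2 ^ ((-(N + (fdig dig j:ℤ))) + (-1)) := zpow_le_zpow_right₀ one_le_two hle
      _ = 2 ^ (-(N + (fdig dig j:ℤ))) / 2 := by
          rw [zpow_add₀ (two_ne_zero : (2:ℝ) ≠ 0)]
          norm_num
          ring
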